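/- Fix ρ ∈ (0,1) and a target distribution Z* on ℝ^d with finite second moment. Define the sequence Z⁽ⁿ⁺¹⁾ = ρZ⁽ⁿ⁾ + (1−ρ)Z* starting from any Z⁽⁰⁾ with finite second moment. Then W₂(Z⁽ⁿ⁾, Z*) ≤ ρ^{n/2} · W₂(Z⁽⁰⁾, Z*), and in particular W₂(Z⁽ⁿ⁾, Z*) → 0 as n → ∞. -/

import Mathlib

open MeasureTheory ENNReal

abbrev Euc (d : ℕ) := EuclideanSpace ℝ (Fin d)

/-- A coupling of `μ` and `ν`: a probability measure on the product with the given marginals. -/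
def IsCoupling {d : ℕ} (π : Measure (Euc d × Euc d)) (μ ν : Measure (Euc d)) : Prop :=
  IsProbabilityMeasure π ∧ π.map Prod.fst = μ ∧ π.map Prod.snd = ν

/-- Quadratic transport cost of a coupling. -/
noncomputable def transportCost {d : ℕ} (π : Measure (Euc d × Euc d)) : ℝ≥0∞ :=
  ∫⁻ p, ENNReal.ofReal (‖p.1 - p.2‖ ^ 2) ∂π

/-- Squared 2-Wasserstein distance: infimum of the quadratic transport cost over couplings. -/
noncomputable def W2sq {d : ℕ} (μ ν : Measure (Euc d)) : ℝ≥0∞ :=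
  ⨅ (π : Measure (Euc d × Euc d)) (_ : IsCoupling π μ ν), transportCost π

/-- 2-Wasserstein distance. -/
noncomputable def W2 {d : ℕ} (μ ν : Measure (Euc d)) : ℝ≥0∞ :=
  (W2sq μ ν) ^ (1 / 2 : ℝ)

/-- Finite second moment. -/
def FiniteSecondMoment {d : ℕ} (μ : Measure (Euc d)) : Prop :=
  ∫⁻ x, ENNReal.ofReal (‖x‖ ^ 2) ∂μ < ∞

/-- measurability of the cost integrand -/
lemma cost_meas {d : ℕ} : Measurable fun p : Euc d × Euc d => ENNReal.ofReal (‖p.1 - p.2‖ ^ 2) := by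
  fun_prop

lemma W2sq_le {d : ℕ} {π : Measure (Euc d × Euc d)} {μ ν : Measure (Euc d)}
    (h : IsCoupling π μ ν) : W2sq μ ν ≤ transportCost π :=
  iInf_le_of_le π (iInf_le _ h)

lemma diag_coupling {d : ℕ} (ν : Measure (Euc d)) [IsProbabilityMeasure ν] :
    IsCoupling (ν.map (fun x => (x, x))) ν ν := by
  have hm : Measurable fun x : Euc d => (x, x) := measurable_id.prodMk measurable_id
  refine ⟨Measure.isProbabilityMeasure_map hm.aemeasurable, ?_, ?_⟩ <;>
    rw [Measure.map_map (by fun_prop) hm] <;> simp [Function.comp_def]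

lemma step_contract {d : ℕ} (ρ : ℝ) (hρ : ρ ∈ Set.Ioo (0 : ℝ) 1)
    (μ ν : Measure (Euc d)) [IsProbabilityMeasure ν] :
    W2sq (ENNReal.ofReal ρ • μ + ENNReal.ofReal (1 - ρ) • ν) ν ≤ ENNReal.ofReal ρ * W2sq μ ν := by
  obtain ⟨hρ0, hρ1⟩ := hρ
  have h1ρ : (0:ℝ) ≤ 1 - ρ := by linarith
  have hsum : ENNReal.ofReal ρ + ENNReal.ofReal (1 - ρ) = 1 := by
    rw [← ENNReal.ofReal_add hρ0.le h1ρ]; norm_num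
  have key : ENNReal.ofReal ρ * W2sq μ ν
      = ⨅ (π : Measure (Euc d × Euc d)) (_ : IsCoupling π μ ν),
          ENNReal.ofReal ρ * transportCost π := by
    rw [W2sq, ENNReal.mul_iInf_of_ne (by simp [hρ0]) ofReal_ne_top]
    exact iInf_congr fun π => ENNReal.mul_iInf_of_ne (by simp [hρ0]) ofReal_ne_top
  rw [key]
  refine le_iInf fun π => le_iInf fun hπ => ?_
  obtain ⟨hπP, hπ1, hπ2⟩ := hπ
  have hm : Measurable fun x : Euc d => (x, x) := measurable_id.prodMk measurable_id
  set π' : Measure (Euc d × Euc d) :=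
    ENNReal.ofReal ρ • π + ENNReal.ofReal (1 - ρ) • ν.map (fun x => (x, x)) with hπ'
  obtain ⟨hdP, hd1, hd2⟩ := diag_coupling ν
  have hcoup : IsCoupling π' (ENNReal.ofReal ρ • μ + ENNReal.ofReal (1 - ρ) • ν) ν := by
    refine ⟨?_, ?_, ?_⟩
    · constructor
      simp [hπ', hπP.measure_univ, hdP.measure_univ, hsum]
    · rw [hπ', Measure.map_add _ _ measurable_fst, Measure.map_smul, Measure.map_smul,
        hπ1, hd1]
    · rw [hπ', Measure.map_add _ _ measurable_snd, Measure.map_smul, Measure.map_smul,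
        hπ2, hd2, ← add_smul, hsum, one_smul]
  refine le_trans (W2sq_le hcoup) ?_
  have hdiagcost : transportCost (ν.map (fun x : Euc d => (x, x))) = 0 := by
    rw [transportCost, lintegral_map cost_meas hm]
    simp
  rw [transportCost, hπ', lintegral_add_measure, lintegral_smul_measure, lintegral_smul_measure]
  rw [show (∫⁻ p, ENNReal.ofReal (‖p.1 - p.2‖ ^ 2) ∂(ν.map fun x => (x, x))) = 0 from hdiagcost]
  simp [transportCost]

lemma W2sq_ne_top {d : ℕ} (μ ν : Measure (Euc d)) [IsProbabilityMeasure μ]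
    [IsProbabilityMeasure ν] (hμ : FiniteSecondMoment μ) (hν : FiniteSecondMoment ν) :
    W2sq μ ν ≠ ∞ := by
  have hcoup : IsCoupling (μ.prod ν) μ ν := by
    refine ⟨inferInstance, ?_, ?_⟩
    · rw [← Measure.fst, Measure.fst_prod]
    · rw [← Measure.snd, Measure.snd_prod]
  refine ne_top_of_le_ne_top ?_ (W2sq_le hcoup)
  have hb : ∀ p : Euc d × Euc d, ENNReal.ofReal (‖p.1 - p.2‖ ^ 2) ≤
      2 * ENNReal.ofReal (‖p.1‖ ^ 2) + 2 * ENNReal.ofReal (‖p.2‖ ^ 2) := by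
    intro p
    calc ENNReal.ofReal (‖p.1 - p.2‖ ^ 2) ≤ ENNReal.ofReal (2 * ‖p.1‖ ^ 2 + 2 * ‖p.2‖ ^ 2) := by
          refine ENNReal.ofReal_le_ofReal ?_
          have h := norm_sub_le p.1 p.2
          nlinarith [pow_le_pow_left₀ (norm_nonneg (p.1 - p.2)) h 2,
            sq_nonneg (‖p.1‖ - ‖p.2‖)]
      _ ≤ 2 * ENNReal.ofReal (‖p.1‖ ^ 2) + 2 * ENNReal.ofReal (‖p.2‖ ^ 2) := by
          rw [ENNReal.ofReal_add (by positivity) (by positivity),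
            ENNReal.ofReal_mul (by norm_num), ENNReal.ofReal_mul (by norm_num)]
          norm_num
  refine ne_top_of_le_ne_top ?_ (lintegral_mono hb)
  rw [lintegral_add_left (by fun_prop), lintegral_const_mul _ (by fun_prop),
    lintegral_const_mul _ (by fun_prop)]
  have e1 : ∫⁻ p : Euc d × Euc d, ENNReal.ofReal (‖p.1‖ ^ 2) ∂(μ.prod ν)
      = ∫⁻ x, ENNReal.ofReal (‖x‖ ^ 2) ∂μ := by
    rw [lintegral_prod _ (by fun_prop)]
    simp
  have e2 : ∫⁻ p : Euc d × Euc d, ENNReal.ofReal (‖p.2‖ ^ 2) ∂(μ.prod ν)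
      = ∫⁻ x, ENNReal.ofReal (‖x‖ ^ 2) ∂ν := by
    rw [lintegral_prod _ (by fun_prop)]
    simp
  rw [e1, e2]
  exact ENNReal.add_ne_top.2 ⟨ENNReal.mul_ne_top (by norm_num) hμ.ne,
    ENNReal.mul_ne_top (by norm_num) hν.ne⟩

/-- Iterating the mixture update `Z⁽ⁿ⁺¹⁾ = ρZ⁽ⁿ⁾ + (1-ρ)Z*` contracts the 2-Wasserstein
distance to `Z*` geometrically, and the distance tends to zero. -/
theorem iterated_mixture_convergence {d : ℕ} (ρ : ℝ) (hρ : ρ ∈ Set.Ioo (0 : ℝ) 1)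
    (Zstar : Measure (Euc d)) [IsProbabilityMeasure Zstar] (hZs : FiniteSecondMoment Zstar)
    (Z : ℕ → Measure (Euc d)) (hprob : ∀ n, IsProbabilityMeasure (Z n))
    (h0 : FiniteSecondMoment (Z 0))
    (hrec : ∀ n, Z (n + 1) = ENNReal.ofReal ρ • Z n + ENNReal.ofReal (1 - ρ) • Zstar) :
    (∀ n : ℕ, W2 (Z n) Zstar ≤ ENNReal.ofReal (ρ ^ ((n : ℝ) / 2)) * W2 (Z 0) Zstar) ∧
      Filter.Tendsto (fun n => W2 (Z n) Zstar) Filter.atTop (nhds 0) := by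
  obtain ⟨hρ0, hρ1⟩ := hρ
  have hsq : ∀ n : ℕ, W2sq (Z n) Zstar ≤ (ENNReal.ofReal ρ) ^ n * W2sq (Z 0) Zstar := by
    intro n
    induction n with
    | zero => simp
    | succ n ih =>
      rw [hrec n]
      calc W2sq (ENNReal.ofReal ρ • Z n + ENNReal.ofReal (1 - ρ) • Zstar) Zstar
          ≤ ENNReal.ofReal ρ * W2sq (Z n) Zstar := step_contract ρ ⟨hρ0, hρ1⟩ _ _
        _ ≤ ENNReal.ofReal ρ * ((ENNReal.ofReal ρ) ^ n * W2sq (Z 0) Zstar) := by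
            exact mul_le_mul_right ih _
        _ = (ENNReal.ofReal ρ) ^ (n + 1) * W2sq (Z 0) Zstar := by ring
  have hW : ∀ n : ℕ, W2 (Z n) Zstar ≤ ENNReal.ofReal (ρ ^ ((n : ℝ) / 2)) * W2 (Z 0) Zstar := by
    intro n
    rw [W2, W2]
    calc W2sq (Z n) Zstar ^ (1/2 : ℝ)
        ≤ ((ENNReal.ofReal ρ) ^ n * W2sq (Z 0) Zstar) ^ (1/2 : ℝ) :=
          ENNReal.rpow_le_rpow (hsq n) (by norm_num)
      _ = ((ENNReal.ofReal ρ) ^ n) ^ (1/2 : ℝ) * W2sq (Z 0) Zstar ^ (1/2 : ℝ) :=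
          ENNReal.mul_rpow_of_nonneg _ _ (by norm_num)
      _ = ENNReal.ofReal (ρ ^ ((n : ℝ) / 2)) * W2sq (Z 0) Zstar ^ (1/2 : ℝ) := by
          congr 1
          rw [← ENNReal.rpow_natCast, ← ENNReal.rpow_mul,
            ← ENNReal.ofReal_rpow_of_pos hρ0]
          congr 1
          ring
  refine ⟨hW, ?_⟩
  have hfin : W2 (Z 0) Zstar ≠ ∞ := by
    rw [W2]
    have := hprob 0
    exact ENNReal.rpow_ne_top_of_nonneg (by norm_num) (W2sq_ne_top _ _ h0 hZs)
  have hbound : Filter.Tendsto (fun n : ℕ => ENNReal.ofReal (ρ ^ ((n : ℝ) / 2)) * W2 (Z 0) Zstar)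
      Filter.atTop (nhds 0) := by
    have heq : ∀ n : ℕ, ENNReal.ofReal (ρ ^ ((n : ℝ) / 2)) =
        (ENNReal.ofReal (ρ ^ (1/2 : ℝ))) ^ n := by
      intro n
      rw [← ENNReal.ofReal_pow (Real.rpow_nonneg hρ0.le _), ← Real.rpow_natCast (ρ ^ (1/2:ℝ)),
        ← Real.rpow_mul hρ0.le]
      congr 1; ring
    simp only [heq]
    have hlt : ENNReal.ofReal (ρ ^ (1/2 : ℝ)) < 1 := by
      rw [← ENNReal.ofReal_one]
      exact ENNReal.ofReal_lt_ofReal_iff_of_nonneg (Real.rpow_nonneg hρ0.le _) |>.2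
        (Real.rpow_lt_one hρ0.le hρ1 (by norm_num))
    have h0t : Filter.Tendsto (fun n : ℕ => (ENNReal.ofReal (ρ ^ (1/2 : ℝ))) ^ n)
        Filter.atTop (nhds 0) := ENNReal.tendsto_pow_atTop_nhds_zero_of_lt_one hlt
    simpa using ENNReal.Tendsto.mul_const h0t (Or.inr hfin)
  exact tendsto_of_tendsto_of_tendsto_of_le_of_le tendsto_const_nhds hbound
    (fun n => zero_le) hW
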